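/- The number of parking functions of length n is (n+1)^{n-1}. -/

import Mathlib

/-- `x : Fin n → ℕ` is a parking function of length `n`: entries lie in `{1,...,n}` and
for every `k ∈ {1,...,n}`, at least `k` entries are `≤ k`. -/
def IsParkingFunction (n : ℕ) (x : Fin n → ℕ) : Prop :=
  (∀ i, 1 ≤ x i ∧ x i ≤ n) ∧
  ∀ k, 1 ≤ k → k ≤ n → k ≤ (Finset.univ.filter (fun i => x i ≤ k)).card

open Finset

namespace PF

variable {n : ℕ}

/-- fiber counts of `f`, as a function on ℕ (periodic with period n+1) -/
def c (f : Fin n → ZMod (n + 1)) (j : ℕ) : ℕ :=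
  (univ.filter (fun i => f i = (j : ZMod (n + 1)))).card

lemma c_period (f : Fin n → ZMod (n + 1)) (j : ℕ) : c f (j + (n + 1)) = c f j := by
  simp [c, Nat.cast_add, ZMod.natCast_self]

/-- prefix sums of fiber counts -/
def T (f : Fin n → ZMod (n + 1)) (t : ℕ) : ℕ := ∑ j ∈ range t, c f j

lemma T_add_period (f : Fin n → ZMod (n + 1)) (t : ℕ) : T f (t + (n + 1)) = T f t + n := by
  induction t with
  | zero =>
    simp only [T, zero_add, range_zero, sum_empty]
    have : ∑ j ∈ range (n + 1), c f j = Fintype.card (Fin n) := by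
      rw [← Finset.card_univ]
      rw [Finset.card_eq_sum_card_fiberwise (f := fun i => (f i).val) (t := range (n + 1))
        (fun i _ => by have := ZMod.val_lt (f i); simp [ZMod.val_lt]; omega)]
      refine Finset.sum_congr rfl fun j hj => ?_
      simp only [mem_range] at hj
      unfold c
      congr 1
      ext i
      simp only [mem_filter, mem_univ, true_and, c]
      constructor
      · rintro h; rw [h, ZMod.val_natCast_of_lt hj]
      · rintro rfl; simp [ZMod.natCast_val, ZMod.cast_id]
    simp [this]
  | succ t ih =>
    have h1 : t + 1 + (n + 1) = (t + (n + 1)) + 1 := by ring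
    rw [h1, show T f ((t + (n+1)) + 1) = T f (t + (n+1)) + c f (t + (n+1)) from
        Finset.sum_range_succ _ _, ih, c_period,
      show T f (t+1) = T f t + c f t from Finset.sum_range_succ _ _]
    ring

/-- the drifting walk -/
def S (f : Fin n → ZMod (n + 1)) (t : ℕ) : ℤ := (T f t : ℤ) - t

lemma S_add_period (f : Fin n → ZMod (n + 1)) (t : ℕ) : S f (t + (n + 1)) = S f t - 1 := by
  simp [S, T_add_period]; ring

/-- the window condition at starting point `t0` -/
def Q (f : Fin n → ZMod (n + 1)) (t0 : ℕ) : Prop :=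
  ∀ u, t0 < u → u ≤ t0 + n → S f t0 ≤ S f u

end PF

namespace PF

lemma S_sub_period (f : Fin n → ZMod (n + 1)) {u : ℕ} (hu : n + 1 ≤ u) :
    S f u = S f (u - (n + 1)) - 1 := by
  have : u - (n + 1) + (n + 1) = u := Nat.sub_add_cancel hu
  rw [← this, S_add_period]; rw [this]

lemma exists_Q (f : Fin n → ZMod (n + 1)) : ∃ t0 < n + 1, Q f t0 := by
  have hex : ∃ t, t < n + 1 ∧ ∀ t' < n + 1, S f t ≤ S f t' := by
    obtain ⟨t, ht, hmin⟩ := Finset.exists_min_image (range (n + 1)) (S f) ⟨0, by simp⟩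
    exact ⟨t, mem_range.mp ht, fun t' ht' => hmin t' (mem_range.mpr ht')⟩
  classical
  set t0 := Nat.find hex with ht0def
  obtain ⟨ht0lt, ht0min⟩ := Nat.find_spec hex
  refine ⟨t0, ht0lt, fun u hu1 hu2 => ?_⟩
  by_cases hcase : u < n + 1
  · exact ht0min u hcase
  · push_neg at hcase
    rw [S_sub_period f hcase]
    have hlt : u - (n + 1) < t0 := by omega
    have : ¬ (u - (n + 1) < n + 1 ∧ ∀ t' < n + 1, S f (u - (n + 1)) ≤ S f t') :=
      Nat.find_min hex hlt
    have h2 : ∃ t' < n + 1, S f t' < S f (u - (n + 1)) := by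
      by_contra hc; push_neg at hc; exact this ⟨by omega, hc⟩
    obtain ⟨t', ht', hlt'⟩ := h2
    have h3 := ht0min t' ht'
    rw [← ht0def] at h3
    omega

lemma unique_Q (f : Fin n → ZMod (n + 1)) {t0 t1 : ℕ} (h0 : t0 < n + 1) (h1 : t1 < n + 1)
    (hQ0 : Q f t0) (hQ1 : Q f t1) : t0 = t1 := by
  by_contra hne
  -- wlog via an auxiliary claim
  have key : ∀ s t : ℕ, s < n + 1 → t < n + 1 → s < t → Q f s → Q f t → False := by
    intro s t hs ht hst hQs hQt
    have hA : S f s ≤ S f t := hQs t hst (by omega)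
    have hB : S f t ≤ S f (s + (n + 1)) := hQt (s + (n + 1)) (by omega) (by omega)
    rw [S_add_period] at hB
    omega
  rcases Nat.lt_or_ge t0 t1 with h | h
  · exact key t0 t1 h0 h1 h hQ0 hQ1
  · exact key t1 t0 h1 h0 (by omega) hQ1 hQ0

end PF

namespace PF

def ParkZ (g : Fin n → ZMod (n + 1)) : Prop :=
  ∀ k, k < n → k + 1 ≤ (univ.filter (fun i => (g i).val ≤ k)).card

lemma count_eq (f : Fin n → ZMod (n + 1)) (a : ZMod (n + 1)) {k : ℕ} (hk : k < n) :
    (univ.filter (fun i => (f i + a).val ≤ k)).card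
      = ∑ j ∈ Finset.Ico ((-a).val) ((-a).val + (k + 1)), c f j := by
  set t0 := (-a).val with ht0
  have ht0cast : (t0 : ZMod (n + 1)) = -a := ZMod.natCast_val _ |>.trans (ZMod.cast_id _ _)
  have hset : univ.filter (fun i => (f i + a).val ≤ k)
      = (Finset.Ico t0 (t0 + (k + 1))).biUnion
          (fun j => univ.filter (fun i => f i = (j : ZMod (n + 1)))) := by
    ext i
    simp only [mem_filter, mem_univ, true_and, mem_biUnion, Finset.mem_Ico]
    constructor
    · intro h
      refine ⟨t0 + (f i + a).val, ⟨by omega, by omega⟩, ?_⟩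
      have hcast : ((t0 + (f i + a).val : ℕ) : ZMod (n + 1)) = -a + (f i + a) := by
        push_cast [ht0cast, ZMod.natCast_val, ZMod.cast_id]
        ring
      rw [hcast]; ring
    · rintro ⟨j, ⟨hj1, hj2⟩, hfi⟩
      have hcast : ((j - t0 : ℕ) : ZMod (n + 1)) = (j : ZMod (n + 1)) - t0 :=
        Nat.cast_sub hj1
      have hval : f i + a = ((j - t0 : ℕ) : ZMod (n + 1)) := by
        rw [hfi, hcast, ht0cast]; ring
      rw [hval, ZMod.val_natCast_of_lt (by omega)]
      omega
  rw [hset, Finset.card_biUnion]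
  · rfl
  · intro j1 hj1 j2 hj2 hne
    simp only [Finset.mem_coe, Finset.coe_Ico, Set.mem_Ico, Finset.mem_Ico] at hj1 hj2
    rw [Function.onFun, Finset.disjoint_filter]
    intro x _ h1 h2
    have hj : (j1 : ZMod (n + 1)) = (j2 : ZMod (n + 1)) := h1 ▸ h2
    rw [ZMod.natCast_eq_natCast_iff] at hj
    have hdvd := hj.dvd
    have hz : (j2 : ℤ) - j1 = 0 := by
      refine Int.eq_zero_of_abs_lt_dvd hdvd ?_
      rw [abs_sub_lt_iff]
      constructor <;> push_cast <;> omega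
    exact hne (by omega)

lemma parkZ_shift_iff (f : Fin n → ZMod (n + 1)) (a : ZMod (n + 1)) :
    ParkZ (fun i => f i + a) ↔ Q f ((-a).val) := by
  set t0 := (-a).val with ht0
  have hsum : ∀ k : ℕ, T f t0 + ∑ j ∈ Finset.Ico t0 (t0 + (k + 1)), c f j
      = T f (t0 + (k + 1)) := by
    intro k
    simp only [T, Finset.range_eq_Ico]
    exact Finset.sum_Ico_consecutive _ (Nat.zero_le _) (by omega)
  constructor
  · intro hP u hu1 hu2
    obtain ⟨k, hk, rfl⟩ : ∃ k, k < n ∧ u = t0 + (k + 1) := ⟨u - t0 - 1, by omega, by omega⟩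
    have hc := hP k hk
    rw [count_eq f a hk, ← ht0] at hc
    have := hsum k
    simp only [S]
    omega
  · intro hQ k hk
    have hq := hQ (t0 + (k + 1)) (by omega) (by omega)
    rw [count_eq f a hk, ← ht0]
    have := hsum k
    simp only [S] at hq
    omega

lemma existsUnique_shift (f : Fin n → ZMod (n + 1)) :
    ∃! a : ZMod (n + 1), ParkZ (fun i => f i + a) := by
  obtain ⟨t0, ht0, hQ⟩ := exists_Q f
  refine ⟨-(t0 : ZMod (n + 1)), ?_, ?_⟩
  · show ParkZ _
    rw [parkZ_shift_iff]
    rwa [neg_neg, ZMod.val_natCast_of_lt ht0]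
  · intro a ha
    rw [parkZ_shift_iff] at ha
    have heq := unique_Q f ((-a).val_lt) ht0 ha hQ
    have h2 : -a = (t0 : ZMod (n + 1)) := by
      rw [← heq, ZMod.natCast_val, ZMod.cast_id]
    have := congrArg Neg.neg h2
    simpa using this

end PF

namespace PF

lemma parkZ_val_lt (hn : 1 ≤ n) {g : Fin n → ZMod (n + 1)} (hg : ParkZ g) (i : Fin n) :
    (g i).val < n := by
  have h := hg (n - 1) (by omega)
  have hle : (univ.filter (fun i => (g i).val ≤ n - 1)).card ≤ n := by
    calc (univ.filter (fun i => (g i).val ≤ n - 1)).card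
        ≤ (univ : Finset (Fin n)).card := Finset.card_filter_le _ _
      _ = n := by simp
  have : univ.filter (fun i => (g i).val ≤ n - 1) = univ := by
    apply Finset.eq_univ_of_card
    simp only [Finset.card_univ, Fintype.card_fin]
    omega
  have := Finset.eq_univ_iff_forall.mp this i
  simp only [mem_filter, mem_univ, true_and] at this
  omega

noncomputable def equiv1 (hn : 1 ≤ n) :
    {x : Fin n → ℕ // IsParkingFunction n x} ≃ {g : Fin n → ZMod (n + 1) // ParkZ g} where
  toFun := fun ⟨x, hx⟩ => ⟨fun i => ((x i - 1 : ℕ) : ZMod (n + 1)),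
    by
      intro k hk
      have hval : ∀ i, (((x i - 1 : ℕ) : ZMod (n + 1))).val = x i - 1 := fun i =>
        ZMod.val_natCast_of_lt (by have := hx.1 i; omega)
      have : (univ.filter (fun i => (((x i - 1 : ℕ) : ZMod (n + 1))).val ≤ k))
          = univ.filter (fun i => x i ≤ k + 1) := by
        apply Finset.filter_congr
        intro i _
        rw [hval i]
        have := hx.1 i
        omega
      rw [this]
      exact hx.2 (k + 1) (by omega) (by omega)⟩
  invFun := fun ⟨g, hg⟩ => ⟨fun i => (g i).val + 1,
    by
      constructor
      · intro i
        have := parkZ_val_lt hn hg i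
        constructor
        · show 1 ≤ (g i).val + 1
          omega
        · show (g i).val + 1 ≤ n
          omega
      · intro k hk1 hk2
        have : (univ.filter (fun i => (g i).val + 1 ≤ k))
            = univ.filter (fun i => (g i).val ≤ k - 1) := by
          apply Finset.filter_congr
          intro i _
          omega
        rw [this]
        have := hg (k - 1) (by omega)
        omega⟩
  left_inv := fun ⟨x, hx⟩ => by
    ext i
    simp only
    rw [ZMod.val_natCast_of_lt (by have := hx.1 i; omega)]
    have := hx.1 i
    omega
  right_inv := fun ⟨g, hg⟩ => by
    ext i
    simp only [Nat.add_sub_cancel]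
    rw [ZMod.natCast_val, ZMod.cast_id]

noncomputable def shiftOf (f : Fin n → ZMod (n + 1)) : ZMod (n + 1) :=
  (existsUnique_shift f).choose

lemma shiftOf_spec (f : Fin n → ZMod (n + 1)) : ParkZ (fun i => f i + shiftOf f) :=
  (existsUnique_shift f).choose_spec.1

lemma shiftOf_unique (f : Fin n → ZMod (n + 1)) {a : ZMod (n + 1)}
    (h : ParkZ (fun i => f i + a)) : a = shiftOf f :=
  (existsUnique_shift f).choose_spec.2 a h

noncomputable def equiv2 :
    (Fin n → ZMod (n + 1)) ≃ {g : Fin n → ZMod (n + 1) // ParkZ g} × ZMod (n + 1) where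
  toFun := fun f => (⟨fun i => f i + shiftOf f, shiftOf_spec f⟩, shiftOf f)
  invFun := fun p => fun i => p.1.1 i - p.2
  left_inv := fun f => by
    funext i
    simp
  right_inv := fun ⟨⟨g, hg⟩, a⟩ => by
    have hpark : ParkZ (fun i => (fun j => g j - a) i + a) := by
      simpa using hg
    have ha : a = shiftOf (fun j => g j - a) := shiftOf_unique _ hpark
    simp only [Prod.mk.injEq, Subtype.mk.injEq]
    constructor
    · funext i
      rw [← ha]
      ring
    · exact ha.symm

end PF

theorem card_parkingFunctions (n : ℕ) (hn : 1 ≤ n) :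
    Nat.card {x : Fin n → ℕ // IsParkingFunction n x} = (n + 1) ^ (n - 1) := by
  have h2 := Nat.card_congr (PF.equiv2 (n := n))
  have h1 := Nat.card_congr (PF.equiv1 (n := n) hn)
  rw [Nat.card_eq_fintype_card, Fintype.card_fun] at h2
  simp only [ZMod.card, Fintype.card_fin] at h2
  rw [Nat.card_prod, Nat.card_eq_fintype_card (α := ZMod (n + 1)), ZMod.card] at h2
  rw [h1]
  have key : Nat.card {g : Fin n → ZMod (n + 1) // PF.ParkZ g} * (n + 1) = (n + 1) ^ n :=
    h2.symm
  have hpow : (n + 1) ^ n = (n + 1) ^ (n - 1) * (n + 1) := by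
    rw [← pow_succ]
    congr 1
    omega
  rw [hpow] at key
  exact Nat.eq_of_mul_eq_mul_right (by omega) key
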